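/- Let $\omega_0, \omega_1 > 0$ with $\omega_1/\omega_0 \notin \mathbb{Q}$. Let $h : \mathbb{R} \to \mathbb{R}$ be continuous and $\frac{2\pi}{\omega_1}$-periodic with mean value zero, i.e. $\int_0^{2\pi/\omega_1} h(\tau)\, d\tau = 0$, let $\psi : \mathbb{R} \to \mathbb{R}$ be continuous and $\frac{2\pi}{\omega_0}$-periodic, and let $g : [0,T] \to \mathbb{R}$ be continuous, where $0 < T < \infty$. Then $\lim_{\varepsilon \to 0^+} \int_0^T g(t)\, h\!\left(\frac{t}{\varepsilon}\right) \psi\!\left(\frac{t}{\varepsilon}\right) dt = 0$. -/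

import Mathlib

open Real Filter Topology MeasureTheory

open Complex

lemma aux_int_exp {P : ℝ} (hP : 0 < P) {n : ℤ} (hn : n ≠ 0) :
    ∫ x in (0:ℝ)..P, Complex.exp (2 * π * Complex.I * n * x / P) = 0 := by
  have hc : (2 * π * Complex.I * n / P : ℂ) ≠ 0 := by
    apply div_ne_zero
    · have : (π:ℂ) ≠ 0 := by exact_mod_cast Complex.ofReal_ne_zero.mpr Real.pi_ne_zero
      simp [Complex.I_ne_zero, this, hn]
    · exact_mod_cast Complex.ofReal_ne_zero.mpr hP.ne'
  have : ∀ x : ℝ, (2 * π * Complex.I * n * x / P : ℂ) = (2 * π * Complex.I * n / P) * x := by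
    intro x; ring
  simp_rw [this]
  rw [integral_exp_mul_complex hc]
  have hPne : (P:ℂ) ≠ 0 := Complex.ofReal_ne_zero.mpr hP.ne'
  have h1 : (2 * π * Complex.I * n / P : ℂ) * (P:ℂ) = n * (2 * π * Complex.I) := by
    rw [div_mul_cancel₀ _ hPne]; ring
  rw [h1, Complex.exp_int_mul_two_pi_mul_I]
  simp

lemma aux_approx {P : ℝ} (hP : 0 < P) (f : ℝ → ℂ) (hf : Continuous f)
    (hper : Function.Periodic f P) {δ : ℝ} (hδ : 0 < δ) :
    ∃ (s : Finset ℤ) (c : ℤ → ℂ), ∀ x : ℝ,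
      ‖f x - ∑ n ∈ s, c n * Complex.exp (2 * π * Complex.I * n * x / P)‖ ≤ δ := by
  haveI : Fact (0 < P) := ⟨hP⟩
  let F : C(AddCircle P, ℂ) := ⟨hper.lift, by
    rw [continuous_coinduced_dom]; exact hf⟩
  have hdense := span_fourier_closure_eq_top (T := P)
  have hFmem : F ∈ (Submodule.span ℂ (Set.range (@fourier P))).topologicalClosure := by
    rw [hdense]; trivial
  have hclos : F ∈ closure ((Submodule.span ℂ (Set.range (@fourier P))) :
      Set C(AddCircle P, ℂ)) := hFmem
  rw [Metric.mem_closure_iff] at hclos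
  obtain ⟨G, hGmem, hGdist⟩ := hclos δ hδ
  rw [SetLike.mem_coe, Finsupp.mem_span_range_iff_exists_finsupp] at hGmem
  obtain ⟨cc, hcc⟩ := hGmem
  refine ⟨cc.support, cc, fun x => ?_⟩
  have h1 : (∑ n ∈ cc.support, cc n * Complex.exp (2 * π * Complex.I * n * x / P))
      = G ((x : AddCircle P)) := by
    rw [← hcc]
    rw [Finsupp.sum]
    simp only [ContinuousMap.coe_sum, Finset.sum_apply]
    refine Finset.sum_congr rfl fun n _ => ?_
    simp [fourier_coe_apply, smul_eq_mul]
  have h2 : f x = F ((x : AddCircle P)) := (hper.lift_coe x).symm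
  rw [h1, h2]
  have := ContinuousMap.dist_apply_le_dist (f := F) (g := G) ((x : AddCircle P))
  calc ‖F (x:AddCircle P) - G (x:AddCircle P)‖ = dist (F (x:AddCircle P)) (G (x:AddCircle P)) :=
        (dist_eq_norm _ _).symm
    _ ≤ dist F G := ContinuousMap.dist_apply_le_dist _
    _ ≤ δ := hGdist.le

lemma aux_approx0 {P : ℝ} (hP : 0 < P) (f : ℝ → ℂ) (hf : Continuous f)
    (hper : Function.Periodic f P) (hmean : ∫ x in (0:ℝ)..P, f x = 0)
    {δ : ℝ} (hδ : 0 < δ) :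
    ∃ (s : Finset ℤ) (c : ℤ → ℂ), 0 ∉ s ∧ ∀ x : ℝ,
      ‖f x - ∑ n ∈ s, c n * Complex.exp (2 * π * Complex.I * n * x / P)‖ ≤ δ := by
  obtain ⟨s, c, hsc⟩ := aux_approx hP f hf hper (half_pos hδ)
  set Q : ℝ → ℂ := fun x => ∑ n ∈ s, c n * Complex.exp (2 * π * Complex.I * n * x / P) with hQ
  set a : ℂ := if 0 ∈ s then c 0 else 0 with ha
  -- integral of Q over a period is a * P
  have hint : ∀ n ∈ s, IntervalIntegrable
      (fun x : ℝ => c n * Complex.exp (2 * π * Complex.I * n * x / P)) volume 0 P := by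
    intro n _
    exact (Continuous.intervalIntegrable (by fun_prop) 0 P)
  have hQint : ∫ x in (0:ℝ)..P, Q x = a * P := by
    show ∫ x in (0:ℝ)..P, ∑ n ∈ s, c n * Complex.exp (2 * π * Complex.I * n * x / P) = a * P
    rw [intervalIntegral.integral_finset_sum hint]
    have : ∀ n ∈ s, (∫ x in (0:ℝ)..P, c n * Complex.exp (2 * π * Complex.I * n * x / P))
        = if n = 0 then c n * P else 0 := by
      intro n _
      rw [intervalIntegral.integral_const_mul]
      by_cases hn : n = 0
      · subst hn; simp
      · rw [aux_int_exp hP hn, if_neg hn, mul_zero]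
    rw [Finset.sum_congr rfl this, Finset.sum_ite_eq' s 0 (fun n => c n * P)]
    rw [ha]; split_ifs <;> simp
  -- |a| ≤ δ/2
  have haP : ‖a‖ ≤ δ / 2 := by
    have hQf : ‖∫ x in (0:ℝ)..P, (Q x - f x)‖ ≤ (δ/2) * |P - 0| := by
      apply intervalIntegral.norm_integral_le_of_norm_le_const
      intro x _
      rw [norm_sub_rev]; exact hsc x
    have hQfi : IntervalIntegrable Q volume 0 P :=
      (Continuous.intervalIntegrable (by fun_prop) 0 P)
    have hfi : IntervalIntegrable f volume 0 P := hf.intervalIntegrable 0 P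
    rw [intervalIntegral.integral_sub hQfi hfi, hmean, sub_zero, hQint] at hQf
    have : ‖a * (P:ℂ)‖ = ‖a‖ * P := by
      rw [norm_mul, Complex.norm_real, Real.norm_eq_abs, abs_of_pos hP]
    rw [this, sub_zero, abs_of_pos hP] at hQf
    calc ‖a‖ = ‖a‖ * P / P := by field_simp
      _ ≤ (δ/2) * P / P := by gcongr
      _ = δ/2 := by field_simp
  refine ⟨s.erase 0, c, Finset.notMem_erase 0 s, fun x => ?_⟩
  have hsplit : ∑ n ∈ s.erase 0, c n * Complex.exp (2 * π * Complex.I * n * x / P)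
      = Q x - a := by
    by_cases h0 : 0 ∈ s
    · rw [Finset.sum_erase_eq_sub h0, hQ, ha, if_pos h0]
      simp
    · rw [Finset.erase_eq_of_notMem h0, ha, if_neg h0, sub_zero, hQ]
  rw [hsplit]
  calc ‖f x - (Q x - a)‖ = ‖(f x - Q x) + a‖ := by ring_nf
    _ ≤ ‖f x - Q x‖ + ‖a‖ := norm_add_le _ _
    _ ≤ δ/2 + δ/2 := add_le_add (hsc x) haP
    _ = δ := by ring

lemma aux_RL {T : ℝ} (hT : 0 < T) (g : ℝ → ℝ) (hg : ContinuousOn g (Set.Icc 0 T))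
    {μ : ℝ} (hμ : μ ≠ 0) :
    Tendsto (fun ε : ℝ => ∫ t in (0:ℝ)..T, (g t : ℂ) *
        Complex.exp (2 * π * Complex.I * (μ : ℂ) * ((t / ε : ℝ) : ℂ)))
      (𝓝[>] 0) (𝓝 0) := by
  set f : ℝ → ℂ := Set.Ioc (0:ℝ) T |>.indicator (fun t => (g t : ℂ)) with hf
  have hRL := Real.tendsto_integral_exp_smul_cocompact f
  -- the frequency map
  have hw : Tendsto (fun ε : ℝ => -μ / ε) (𝓝[>] 0) (cocompact ℝ) := by
    rw [cocompact_eq_atBot_atTop]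
    rcases lt_or_gt_of_ne hμ with hneg | hpos
    · apply Tendsto.mono_right _ le_sup_right
      have : Tendsto (fun ε : ℝ => -μ * ε⁻¹) (𝓝[>] 0) atTop :=
        Tendsto.const_mul_atTop (by linarith) tendsto_inv_nhdsGT_zero
      simpa [div_eq_mul_inv] using this
    · apply Tendsto.mono_right _ le_sup_left
      have : Tendsto (fun ε : ℝ => μ * ε⁻¹) (𝓝[>] 0) atTop :=
        Tendsto.const_mul_atTop hpos tendsto_inv_nhdsGT_zero
      have h2 : Tendsto (fun ε : ℝ => -(μ * ε⁻¹)) (𝓝[>] 0) atBot := tendsto_neg_atTop_atBot.comp this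
      simpa [div_eq_mul_inv, neg_div] using h2
  have hcomp := hRL.comp hw
  have heq : ∀ ε : ℝ, (∫ v : ℝ, Real.fourierChar (-(v * (-μ / ε))) • f v)
      = ∫ t in (0:ℝ)..T, (g t : ℂ) * Complex.exp (2 * π * Complex.I * (μ : ℂ) * ((t / ε : ℝ) : ℂ)) := by
    intro ε
    rw [intervalIntegral.integral_of_le hT.le]
    rw [← MeasureTheory.integral_indicator measurableSet_Ioc]
    congr 1
    ext v
    rw [hf]
    by_cases hv : v ∈ Set.Ioc (0:ℝ) T
    · rw [Set.indicator_of_mem hv, Set.indicator_of_mem hv, Circle.smul_def,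
        Real.fourierChar_apply, smul_eq_mul, mul_comm _ ((g v : ℂ))]
      congr 1
      push_cast
      ring
    · rw [Set.indicator_of_notMem hv, Set.indicator_of_notMem hv, smul_zero]
  exact Tendsto.congr (fun ε => heq ε) hcomp

/-- bound for a continuous periodic function -/
lemma aux_bdd {P : ℝ} (hP : 0 < P) (f : ℝ → ℝ) (hf : Continuous f)
    (hper : Function.Periodic f P) : ∃ C : ℝ, 0 ≤ C ∧ ∀ x : ℝ, |f x| ≤ C := by
  obtain ⟨C, hC⟩ := (isCompact_Icc (a := (0:ℝ)) (b := P)).exists_bound_of_continuousOn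
    hf.continuousOn
  refine ⟨max C 0, le_max_right _ _, fun x => ?_⟩
  obtain ⟨y, hy, hxy⟩ := hper.exists_mem_Ico₀ hP x
  rw [hxy]
  exact le_trans (hC y (Set.Ico_subset_Icc_self hy)) (le_max_left _ _)

/-- Non-resonant averaging: if `ω₁/ω₀` is irrational, `h` is continuous,
`2π/ω₁`-periodic with zero mean, `ψ` is continuous and `2π/ω₀`-periodic, and `g` is
continuous on `[0,T]`, then `∫₀ᵀ g(t) h(t/ε) ψ(t/ε) dt → 0` as `ε → 0⁺`. -/
theorem stmt10 (ω₀ ω₁ : ℝ) (hω₀ : 0 < ω₀) (hω₁ : 0 < ω₁)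
    (hirr : Irrational (ω₁ / ω₀))
    (h : ℝ → ℝ) (hh : Continuous h) (hhper : Function.Periodic h (2 * π / ω₁))
    (hhmean : ∫ τ in (0 : ℝ)..(2 * π / ω₁), h τ = 0)
    (ψ : ℝ → ℝ) (hψ : Continuous ψ) (hψper : Function.Periodic ψ (2 * π / ω₀))
    (T : ℝ) (hT : 0 < T)
    (g : ℝ → ℝ) (hg : ContinuousOn g (Set.Icc 0 T)) :
    Tendsto (fun ε : ℝ => ∫ t in (0 : ℝ)..T, g t * h (t / ε) * ψ (t / ε))
      (𝓝[>] 0) (𝓝 0) := by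
  have hπ : 0 < π := Real.pi_pos
  set P₁ : ℝ := 2 * π / ω₁ with hP₁def
  set P₀ : ℝ := 2 * π / ω₀ with hP₀def
  have hP₁ : 0 < P₁ := by positivity
  have hP₀ : 0 < P₀ := by positivity
  -- complexifications
  set hc : ℝ → ℂ := fun x => ((h x : ℝ) : ℂ) with hhc
  set ψc : ℝ → ℂ := fun x => ((ψ x : ℝ) : ℂ) with hψc
  have hhcC : Continuous hc := Complex.continuous_ofReal.comp hh
  have hψcC : Continuous ψc := Complex.continuous_ofReal.comp hψ
  have hhcper : Function.Periodic hc P₁ := fun x => by simp [hhc, hhper x]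
  have hψcper : Function.Periodic ψc P₀ := fun x => by simp [hψc, hψper x]
  have hhcmean : ∫ x in (0:ℝ)..P₁, hc x = 0 := by
    rw [hhc]
    rw [intervalIntegral.integral_ofReal, hhmean]
    simp
  -- bounds
  obtain ⟨Ch, hCh0, hCh⟩ := aux_bdd hP₁ h hh hhper
  obtain ⟨Cψ, hCψ0, hCψ⟩ := aux_bdd hP₀ ψ hψ hψper
  obtain ⟨Cg', hCg'⟩ := (isCompact_Icc (a := (0:ℝ)) (b := T)).exists_bound_of_continuousOn hg
  set Cg : ℝ := max Cg' 0 with hCgdef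
  have hCg0 : 0 ≤ Cg := le_max_right _ _
  have hCg : ∀ t ∈ Set.Icc (0:ℝ) T, |g t| ≤ Cg :=
    fun t ht => le_trans (hCg' t ht) (le_max_left _ _)
  -- main estimate
  rw [NormedAddCommGroup.tendsto_nhds_zero]
  intro δ hδ
  set B : ℝ := Cψ + Ch + 2 with hBdef
  have hB : 0 < B := by positivity
  set δ₁ : ℝ := min 1 (δ / (2 * (Cg + 1) * T * B)) with hδ₁def
  have hδ₁ : 0 < δ₁ := lt_min one_pos (by positivity)
  have hδ₁1 : δ₁ ≤ 1 := min_le_left _ _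
  obtain ⟨s₁, c, hs₁0, hQ₁⟩ := aux_approx0 hP₁ hc hhcC hhcper hhcmean hδ₁
  obtain ⟨s₀, d, hQ₀⟩ := aux_approx hP₀ ψc hψcC hψcper hδ₁
  set Q₁ : ℝ → ℂ := fun x => ∑ n ∈ s₁, c n * Complex.exp (2 * π * Complex.I * n * x / P₁)
    with hQ₁def
  set Q₀ : ℝ → ℂ := fun x => ∑ m ∈ s₀, d m * Complex.exp (2 * π * Complex.I * m * x / P₀)
    with hQ₀def
  -- frequencies are nonzero
  have hμne : ∀ p ∈ s₁ ×ˢ s₀, ((p.1 : ℝ) / P₁ + (p.2 : ℝ) / P₀) ≠ 0 := by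
    rintro ⟨n, m⟩ hp hμ0
    rw [Finset.mem_product] at hp
    have hn : (n : ℝ) ≠ 0 := by
      exact_mod_cast fun h0 => hs₁0 (by simpa [Int.cast_injective.eq_iff] using
        ((by exact_mod_cast h0 : (n:ℤ) = 0) ▸ hp.1))
    have hkey : (n : ℝ) * ω₁ + (m : ℝ) * ω₀ = 0 := by
      rw [hP₁def, hP₀def] at hμ0
      field_simp at hμ0
      linarith
    apply hirr
    refine ⟨(-m : ℚ) / (n : ℚ), ?_⟩
    have hncast : ((n:ℚ):ℝ) ≠ 0 := by push_cast; exact hn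
    push_cast
    rw [div_eq_div_iff (by push_cast at hncast ⊢; exact hncast) hω₀.ne']
    push_cast
    linarith
  -- the main oscillatory sum tends to zero
  have hKlim : Tendsto (fun ε : ℝ => ∑ p ∈ s₁ ×ˢ s₀, (c p.1 * d p.2) *
      ∫ t in (0:ℝ)..T, (g t : ℂ) *
        Complex.exp (2 * π * Complex.I * (((p.1 : ℝ) / P₁ + (p.2 : ℝ) / P₀ : ℝ) : ℂ)
          * ((t / ε : ℝ) : ℂ))) (𝓝[>] 0) (𝓝 0) := by
    have := tendsto_finset_sum (s₁ ×ˢ s₀) (fun p hp =>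
      ((aux_RL hT g hg (hμne p hp)).const_mul (c p.1 * d p.2)))
    simpa using this
  have hKev : ∀ᶠ ε : ℝ in 𝓝[>] 0, ‖∑ p ∈ s₁ ×ˢ s₀, (c p.1 * d p.2) *
      ∫ t in (0:ℝ)..T, (g t : ℂ) *
        Complex.exp (2 * π * Complex.I * (((p.1 : ℝ) / P₁ + (p.2 : ℝ) / P₀ : ℝ) : ℂ)
          * ((t / ε : ℝ) : ℂ))‖ < δ / 2 := by
    have := Metric.tendsto_nhds.mp hKlim (δ / 2) (by positivity)
    filter_upwards [this] with ε hε
    rwa [dist_zero_right] at hε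
  filter_upwards [hKev, self_mem_nhdsWithin] with ε hKε hεpos
  have huIcc : Set.uIcc (0:ℝ) T = Set.Icc 0 T := Set.uIcc_of_le hT.le
  have hgC : ContinuousOn (fun t => (g t : ℂ)) (Set.Icc 0 T) :=
    Complex.continuous_ofReal.comp_continuousOn hg
  have hdivC : Continuous fun t : ℝ => t / ε := continuous_id.div_const ε
  have hQ₁C : Continuous Q₁ := by
    rw [hQ₁def]; exact continuous_finset_sum s₁ fun n _ => by fun_prop
  have hQ₀C : Continuous Q₀ := by
    rw [hQ₀def]; exact continuous_finset_sum s₀ fun m _ => by fun_prop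
  have intA : IntervalIntegrable (fun t => (g t : ℂ) * hc (t/ε) * ψc (t/ε)) volume 0 T := by
    apply ContinuousOn.intervalIntegrable
    rw [huIcc]
    exact (hgC.mul ((hhcC.comp hdivC).continuousOn)).mul ((hψcC.comp hdivC).continuousOn)
  have intB : IntervalIntegrable (fun t => (g t : ℂ) * (Q₁ (t/ε) * Q₀ (t/ε))) volume 0 T := by
    apply ContinuousOn.intervalIntegrable
    rw [huIcc]
    exact hgC.mul (((hQ₁C.comp hdivC).mul (hQ₀C.comp hdivC)).continuousOn)
  -- split the integral
  have hJsplit : ∫ t in (0:ℝ)..T, (g t : ℂ) * hc (t/ε) * ψc (t/ε)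
      = (∫ t in (0:ℝ)..T, (g t : ℂ) * (Q₁ (t/ε) * Q₀ (t/ε)))
        + ∫ t in (0:ℝ)..T, ((g t : ℂ) * hc (t/ε) * ψc (t/ε)
            - (g t : ℂ) * (Q₁ (t/ε) * Q₀ (t/ε))) := by
    rw [← intervalIntegral.integral_add intB (intA.sub intB)]
    apply intervalIntegral.integral_congr
    intro t _
    ring
  -- identify the main term with the oscillatory sum
  have hKeq : ∫ t in (0:ℝ)..T, (g t : ℂ) * (Q₁ (t/ε) * Q₀ (t/ε))
      = ∑ p ∈ s₁ ×ˢ s₀, (c p.1 * d p.2) *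
          ∫ t in (0:ℝ)..T, (g t : ℂ) *
            Complex.exp (2 * π * Complex.I * (((p.1 : ℝ) / P₁ + (p.2 : ℝ) / P₀ : ℝ) : ℂ)
              * ((t / ε : ℝ) : ℂ)) := by
    have hpt : ∀ t : ℝ, (g t : ℂ) * (Q₁ (t/ε) * Q₀ (t/ε))
        = ∑ p ∈ s₁ ×ˢ s₀, (c p.1 * d p.2) * ((g t : ℂ) *
            Complex.exp (2 * π * Complex.I * (((p.1 : ℝ) / P₁ + (p.2 : ℝ) / P₀ : ℝ) : ℂ)
              * ((t / ε : ℝ) : ℂ))) := by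
      intro t
      rw [hQ₁def, hQ₀def]
      simp only [Finset.sum_mul_sum, Finset.sum_product]
      rw [Finset.mul_sum]
      refine Finset.sum_congr rfl fun n _ => ?_
      rw [Finset.mul_sum]
      refine Finset.sum_congr rfl fun m _ => ?_
      have hexp : (2 * (π:ℂ) * Complex.I * (((n : ℝ) / P₁ + (m : ℝ) / P₀ : ℝ) : ℂ)
            * ((t / ε : ℝ) : ℂ))
          = 2 * π * Complex.I * n * ((t/ε : ℝ) : ℂ) / P₁
            + 2 * π * Complex.I * m * ((t/ε : ℝ) : ℂ) / P₀ := by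
        push_cast
        ring
      rw [hexp, Complex.exp_add]
      ring
    simp_rw [hpt]
    rw [intervalIntegral.integral_finset_sum]
    · refine Finset.sum_congr rfl fun p _ => ?_
      rw [intervalIntegral.integral_const_mul]
    · intro p _
      apply ContinuousOn.intervalIntegrable
      rw [huIcc]
      exact continuousOn_const.mul (hgC.mul (by fun_prop : Continuous fun t : ℝ =>
        Complex.exp (2 * π * Complex.I * (((p.1 : ℝ) / P₁ + (p.2 : ℝ) / P₀ : ℝ) : ℂ)
          * ((t / ε : ℝ) : ℂ))).continuousOn)
  -- bound the remainder term
  have hrem : ‖∫ t in (0:ℝ)..T, ((g t : ℂ) * hc (t/ε) * ψc (t/ε)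
      - (g t : ℂ) * (Q₁ (t/ε) * Q₀ (t/ε)))‖ ≤ Cg * (δ₁ * B) * |T - 0| := by
    apply intervalIntegral.norm_integral_le_of_norm_le_const
    intro t ht
    rw [Set.uIoc_of_le hT.le] at ht
    have htIcc : t ∈ Set.Icc (0:ℝ) T := Set.Ioc_subset_Icc_self ht
    set x : ℝ := t / ε with hx
    have hfactor : (g t : ℂ) * hc x * ψc x - (g t : ℂ) * (Q₁ x * Q₀ x)
        = (g t : ℂ) * (hc x * ψc x - Q₁ x * Q₀ x) := by ring
    rw [hfactor, norm_mul]
    have hgb : ‖(g t : ℂ)‖ ≤ Cg := by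
      rw [Complex.norm_real, Real.norm_eq_abs]; exact hCg t htIcc
    have e1 : ‖hc x - Q₁ x‖ ≤ δ₁ := hQ₁ x
    have e2 : ‖ψc x - Q₀ x‖ ≤ δ₁ := hQ₀ x
    have e3 : ‖ψc x‖ ≤ Cψ := by
      rw [hψc]; simp only [Complex.norm_real, Real.norm_eq_abs]; exact hCψ x
    have e4 : ‖hc x‖ ≤ Ch := by
      rw [hhc]; simp only [Complex.norm_real, Real.norm_eq_abs]; exact hCh x
    have e5 : ‖Q₁ x‖ ≤ Ch + δ₁ := by
      calc ‖Q₁ x‖ = ‖hc x - (hc x - Q₁ x)‖ := by ring_nf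
        _ ≤ ‖hc x‖ + ‖hc x - Q₁ x‖ := norm_sub_le _ _
        _ ≤ Ch + δ₁ := add_le_add e4 e1
    have e6 : ‖hc x * ψc x - Q₁ x * Q₀ x‖ ≤ δ₁ * B := by
      have hdecomp : hc x * ψc x - Q₁ x * Q₀ x
          = (hc x - Q₁ x) * ψc x + Q₁ x * (ψc x - Q₀ x) := by ring
      rw [hdecomp]
      calc ‖(hc x - Q₁ x) * ψc x + Q₁ x * (ψc x - Q₀ x)‖
          ≤ ‖(hc x - Q₁ x) * ψc x‖ + ‖Q₁ x * (ψc x - Q₀ x)‖ := norm_add_le _ _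
        _ = ‖hc x - Q₁ x‖ * ‖ψc x‖ + ‖Q₁ x‖ * ‖ψc x - Q₀ x‖ := by rw [norm_mul, norm_mul]
        _ ≤ δ₁ * Cψ + (Ch + δ₁) * δ₁ := by
            apply add_le_add
            · exact mul_le_mul e1 e3 (norm_nonneg _) hδ₁.le
            · exact mul_le_mul e5 e2 (norm_nonneg _) (by positivity)
        _ ≤ δ₁ * B := by rw [hBdef]; nlinarith [hδ₁.le, hδ₁1, hCh0, hCψ0]
    exact mul_le_mul hgb e6 (norm_nonneg _) hCg0
  -- arithmetic: the remainder is at most δ/2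
  have harith : Cg * (δ₁ * B) * |T - 0| ≤ δ / 2 := by
    rw [sub_zero, abs_of_pos hT]
    have hδ₁le : δ₁ ≤ δ / (2 * (Cg + 1) * T * B) := min_le_right _ _
    have hkey : δ₁ * (2 * (Cg + 1) * T * B) ≤ δ :=
      (le_div_iff₀ (by positivity)).mp hδ₁le
    nlinarith [mul_nonneg (mul_nonneg hδ₁.le hB.le) hT.le]
  -- conclude
  have hIJ : ((∫ t in (0:ℝ)..T, g t * h (t/ε) * ψ (t/ε) : ℝ) : ℂ)
      = ∫ t in (0:ℝ)..T, (g t : ℂ) * hc (t/ε) * ψc (t/ε) := by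
    rw [← intervalIntegral.integral_ofReal]
    congr 1
    funext t
    push_cast
    rfl
  calc ‖∫ t in (0:ℝ)..T, g t * h (t/ε) * ψ (t/ε)‖
      = ‖((∫ t in (0:ℝ)..T, g t * h (t/ε) * ψ (t/ε) : ℝ) : ℂ)‖ := by
        rw [Complex.norm_real]
    _ = ‖∫ t in (0:ℝ)..T, (g t : ℂ) * hc (t/ε) * ψc (t/ε)‖ := by rw [hIJ]
    _ ≤ ‖∫ t in (0:ℝ)..T, (g t : ℂ) * (Q₁ (t/ε) * Q₀ (t/ε))‖
        + ‖∫ t in (0:ℝ)..T, ((g t : ℂ) * hc (t/ε) * ψc (t/ε)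
            - (g t : ℂ) * (Q₁ (t/ε) * Q₀ (t/ε)))‖ := by
        rw [hJsplit]; exact norm_add_le _ _
    _ < δ / 2 + δ / 2 := by
        apply add_lt_add_of_lt_of_le
        · rw [hKeq]; exact hKε
        · exact le_trans hrem harith
    _ = δ := by ring
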